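/- (Finite termination of policy iteration.) Let (μ^k)_{k∈ℕ} be any sequence of stationary deterministic policies such that for every k, T_{μ^{k+1}} J_{μ^k} = T J_{μ^k} (each successive policy is greedy with respect to the value of its predecessor). Then there exists N ∈ ℕ such that J_{μ^N} = J*, i.e., policy iteration reaches an optimal policy in finitely many steps. -/

import Mathlib

set_option linter.unusedSectionVars false

section Aux
open Matrix Finset

variable {S : Type*} [Fintype S] [DecidableEq S]

lemma stoch_pow (M : Matrix S S ℝ) (h0 : ∀ x y, 0 ≤ M x y)
    (h1 : ∀ x, ∑ y, M x y = 1) (t : ℕ) :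
    (∀ x y, 0 ≤ (M ^ t) x y) ∧ (∀ x, ∑ y, (M ^ t) x y = 1) := by
  induction t with
  | zero =>
    refine ⟨fun x y => ?_, fun x => ?_⟩
    · by_cases h : x = y <;> simp [pow_zero, Matrix.one_apply, h]
    · simp [pow_zero, Matrix.one_apply]
  | succ n ih =>
    refine ⟨fun x y => ?_, fun x => ?_⟩
    · rw [pow_succ, Matrix.mul_apply]
      exact Finset.sum_nonneg fun z _ => mul_nonneg (ih.1 x z) (h0 z y)
    · simp only [pow_succ, Matrix.mul_apply]
      rw [Finset.sum_comm]
      calc ∑ z, ∑ y, (M ^ n) x z * M z y = ∑ z, (M ^ n) x z * ∑ y, M z y := by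
            simp [Finset.mul_sum]
        _ = 1 := by simp [h1, ih.2 x]

lemma mulVec_abs_le (M : Matrix S S ℝ) (h0 : ∀ x y, 0 ≤ M x y)
    (h1 : ∀ x, ∑ y, M x y = 1) (v : S → ℝ) (C : ℝ) (hv : ∀ y, |v y| ≤ C) (x : S) :
    |M.mulVec v x| ≤ C := by
  calc |M.mulVec v x| = |∑ y, M x y * v y| := rfl
    _ ≤ ∑ y, |M x y * v y| := Finset.abs_sum_le_sum_abs _ _
    _ ≤ ∑ y, M x y * C := by
        refine Finset.sum_le_sum fun y _ => ?_
        rw [abs_mul, abs_of_nonneg (h0 x y)]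
        exact mul_le_mul_of_nonneg_left (hv y) (h0 x y)
    _ = C := by rw [← Finset.sum_mul, h1, one_mul]

lemma mulVec_mono (M : Matrix S S ℝ) (h0 : ∀ x y, 0 ≤ M x y)
    (v w : S → ℝ) (hvw : ∀ y, v y ≤ w y) (x : S) :
    M.mulVec v x ≤ M.mulVec w x :=
  Finset.sum_le_sum fun y _ => mul_le_mul_of_nonneg_left (hvw y) (h0 x y)

variable [Nonempty S]

/-- a uniform bound on a vector -/
noncomputable def vBound (v : S → ℝ) : ℝ :=
  Finset.univ.sup' Finset.univ_nonempty (fun y => |v y|)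

lemma le_vBound (v : S → ℝ) (y : S) : |v y| ≤ vBound v :=
  Finset.le_sup' (fun y => |v y|) (Finset.mem_univ y)

lemma pow_mulVec_abs_le (M : Matrix S S ℝ) (h0 : ∀ x y, 0 ≤ M x y)
    (h1 : ∀ x, ∑ y, M x y = 1) (v : S → ℝ) (t : ℕ) (x : S) :
    |(M ^ t).mulVec v x| ≤ vBound v :=
  mulVec_abs_le _ (stoch_pow M h0 h1 t).1 (stoch_pow M h0 h1 t).2 v _ (le_vBound v) x

lemma summable_series (M : Matrix S S ℝ) (h0 : ∀ x y, 0 ≤ M x y)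
    (h1 : ∀ x, ∑ y, M x y = 1) (v : S → ℝ) {α : ℝ} (hα0 : 0 < α) (hα1 : α < 1) (x : S) :
    Summable (fun t : ℕ => α ^ t * (M ^ t).mulVec v x) := by
  refine Summable.of_norm_bounded (g := fun t => vBound v * α ^ t)
    ((summable_geometric_of_lt_one hα0.le hα1).mul_left _) fun t => ?_
  rw [Real.norm_eq_abs, abs_mul, abs_pow, abs_of_nonneg hα0.le, mul_comm]
  exact mul_le_mul_of_nonneg_right (pow_mulVec_abs_le M h0 h1 v t x) (pow_nonneg hα0.le t)

end Aux

/-- The Bellman operator `T` of the finite discounted MDP. -/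
noncomputable def Tbell {S A : Type*} [Fintype S] [Fintype A] [Nonempty A]
    (P : S → A → S → ℝ) (g : S → A → ℝ) (α : ℝ) (J : S → ℝ) : S → ℝ :=
  fun x => Finset.univ.inf' Finset.univ_nonempty
    (fun a : A => g x a + α * ∑ y, P x a y * J y)

/-- The one-stage DP operator `T_μ` for a stationary deterministic policy `μ`. -/
noncomputable def Tpol {S A : Type*} [Fintype S]
    (P : S → A → S → ℝ) (g : S → A → ℝ) (α : ℝ) (μ : S → A) (J : S → ℝ) : S → ℝ :=
  fun x => g x (μ x) + α * ∑ y, P x (μ x) y * J y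

/-- The transition matrix `P_μ` of a stationary deterministic policy `μ`. -/
def Pmat {S A : Type*} (P : S → A → S → ℝ) (μ : S → A) : Matrix S S ℝ :=
  fun x y => P x (μ x) y

/-- The stage-cost vector `g_μ` of a stationary deterministic policy `μ`. -/
def gvec {S A : Type*} (g : S → A → ℝ) (μ : S → A) : S → ℝ :=
  fun x => g x (μ x)

/-- The value function `J_μ(x) = ∑_{t} α^t (P_μ^t g_μ)(x)` of policy `μ`. -/
noncomputable def Jval {S A : Type*} [Fintype S] [DecidableEq S]
    (P : S → A → S → ℝ) (g : S → A → ℝ) (α : ℝ) (μ : S → A) : S → ℝ :=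
  fun x => ∑' t : ℕ, α ^ t * ((Pmat P μ ^ t).mulVec (gvec g μ)) x

section Aux2
open Matrix Finset

variable {S A : Type*} [Fintype S] [Nonempty S] [DecidableEq S] [Fintype A] [Nonempty A]
variable (P : S → A → S → ℝ) (g : S → A → ℝ) {α : ℝ}

/-- `J_μ` is a fixed point of `T_μ`. -/
lemma Jval_fixed (hP0 : ∀ x a y, 0 ≤ P x a y) (hP1 : ∀ x a, ∑ y, P x a y = 1)
    (hα0 : 0 < α) (hα1 : α < 1) (μ : S → A) :
    Tpol P g α μ (Jval P g α μ) = Jval P g α μ := by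
  set M : Matrix S S ℝ := Pmat P μ with hM
  set gv : S → ℝ := gvec g μ with hgv
  have hM0 : ∀ x y, 0 ≤ M x y := fun x y => hP0 x (μ x) y
  have hM1 : ∀ x, ∑ y, M x y = 1 := fun x => hP1 x (μ x)
  funext x
  have hsum : ∀ z, Summable (fun t : ℕ => α ^ t * (M ^ t).mulVec gv z) :=
    fun z => summable_series M hM0 hM1 gv hα0 hα1 z
  have h0 : Jval P g α μ x
      = α ^ 0 * (M ^ 0).mulVec gv x + ∑' t : ℕ, α ^ (t + 1) * (M ^ (t + 1)).mulVec gv x := by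
    exact (hsum x).tsum_eq_zero_add
  have hshift : ∀ t : ℕ, ∀ z : S,
      α ^ (t + 1) * (M ^ (t + 1)).mulVec gv z
        = α * (M.mulVec (fun y => α ^ t * (M ^ t).mulVec gv y) z) := by
    intro t z
    rw [pow_succ' M t, ← Matrix.mulVec_mulVec]
    have : (M.mulVec (fun y => α ^ t * (M ^ t).mulVec gv y)) z
        = α ^ t * M.mulVec ((M ^ t).mulVec gv) z := by
      simp only [Matrix.mulVec, dotProduct, Finset.mul_sum]
      exact Finset.sum_congr rfl fun y _ => Finset.sum_congr rfl fun w _ => by ring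
    rw [this]; ring
  have htail : ∑' t : ℕ, α ^ (t + 1) * (M ^ (t + 1)).mulVec gv x
      = α * M.mulVec (Jval P g α μ) x := by
    calc ∑' t : ℕ, α ^ (t + 1) * (M ^ (t + 1)).mulVec gv x
        = ∑' t : ℕ, α * (M.mulVec (fun y => α ^ t * (M ^ t).mulVec gv y) x) := by
          exact tsum_congr fun t => hshift t x
      _ = α * ∑' t : ℕ, ∑ y, M x y * (α ^ t * (M ^ t).mulVec gv y) := by
          rw [tsum_mul_left]; rfl
      _ = α * ∑ y, ∑' t : ℕ, M x y * (α ^ t * (M ^ t).mulVec gv y) := by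
          rw [Summable.tsum_finsetSum (fun y _ => (hsum y).mul_left (M x y))]
      _ = α * ∑ y, M x y * Jval P g α μ y := by
          congr 1
          exact Finset.sum_congr rfl fun y _ => tsum_mul_left
      _ = α * M.mulVec (Jval P g α μ) x := rfl
  have : Jval P g α μ x = gv x + α * M.mulVec (Jval P g α μ) x := by
    rw [h0, htail]; simp [Matrix.one_mulVec]
  rw [Tpol]
  exact (this.symm)

/-- If `T_μ J ≤ J` pointwise then `J_μ ≤ J` pointwise. -/
lemma Jval_le_of_Tpol_le (hP0 : ∀ x a y, 0 ≤ P x a y) (hP1 : ∀ x a, ∑ y, P x a y = 1)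
    (hα0 : 0 < α) (hα1 : α < 1) (μ : S → A) (J : S → ℝ)
    (h : ∀ x, Tpol P g α μ J x ≤ J x) : ∀ x, Jval P g α μ x ≤ J x := by
  set M : Matrix S S ℝ := Pmat P μ with hM
  set gv : S → ℝ := gvec g μ with hgv
  have hM0 : ∀ x y, 0 ≤ M x y := fun x y => hP0 x (μ x) y
  have hM1 : ∀ x, ∑ y, M x y = 1 := fun x => hP1 x (μ x)
  have hstep : ∀ z, gv z + α * M.mulVec J z ≤ J z := fun z => h z
  have key : ∀ n : ℕ, ∀ x,
      (∑ t ∈ Finset.range n, α ^ t * (M ^ t).mulVec gv x) + α ^ n * (M ^ n).mulVec J x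
        ≤ J x := by
    intro n
    induction n with
    | zero => intro x; simp [Matrix.one_mulVec]
    | succ n ih =>
      intro x
      have hcomb : α ^ n * (M ^ n).mulVec gv x + α ^ (n + 1) * (M ^ (n + 1)).mulVec J x
          = α ^ n * (M ^ n).mulVec (fun z => gv z + α * M.mulVec J z) x := by
        rw [pow_succ M n, ← Matrix.mulVec_mulVec]
        have : (M ^ n).mulVec (fun z => gv z + α * M.mulVec J z) x
            = (M ^ n).mulVec gv x + α * (M ^ n).mulVec (M.mulVec J) x := by
          simp only [Matrix.mulVec, dotProduct, Finset.mul_sum, ← Finset.sum_add_distrib]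
          refine Finset.sum_congr rfl fun y _ => ?_
          rw [mul_add, Finset.mul_sum]
          congr 1
          exact Finset.sum_congr rfl fun w _ => by ring
        rw [this]; ring
      have hmono : (M ^ n).mulVec (fun z => gv z + α * M.mulVec J z) x
          ≤ (M ^ n).mulVec J x :=
        mulVec_mono _ (stoch_pow M hM0 hM1 n).1 _ _ hstep x
      calc (∑ t ∈ Finset.range (n + 1), α ^ t * (M ^ t).mulVec gv x)
            + α ^ (n + 1) * (M ^ (n + 1)).mulVec J x
          = (∑ t ∈ Finset.range n, α ^ t * (M ^ t).mulVec gv x)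
            + (α ^ n * (M ^ n).mulVec gv x + α ^ (n + 1) * (M ^ (n + 1)).mulVec J x) := by
            rw [Finset.sum_range_succ]; ring
        _ = (∑ t ∈ Finset.range n, α ^ t * (M ^ t).mulVec gv x)
            + α ^ n * (M ^ n).mulVec (fun z => gv z + α * M.mulVec J z) x := by rw [hcomb]
        _ ≤ (∑ t ∈ Finset.range n, α ^ t * (M ^ t).mulVec gv x)
            + α ^ n * (M ^ n).mulVec J x := by
            have := mul_le_mul_of_nonneg_left hmono (pow_nonneg hα0.le n)
            linarith
        _ ≤ J x := ih x
  intro x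
  have hsum : Summable (fun t : ℕ => α ^ t * (M ^ t).mulVec gv x) :=
    summable_series M hM0 hM1 gv hα0 hα1 x
  have h1 : Filter.Tendsto (fun n => ∑ t ∈ Finset.range n, α ^ t * (M ^ t).mulVec gv x)
      Filter.atTop (nhds (Jval P g α μ x)) := hsum.hasSum.tendsto_sum_nat
  have h2 : Filter.Tendsto (fun n : ℕ => α ^ n * (M ^ n).mulVec J x)
      Filter.atTop (nhds 0) := by
    apply squeeze_zero_norm (fun n => ?_)
      (a := fun n : ℕ => vBound J * α ^ n)
    · have : Filter.Tendsto (fun n : ℕ => α ^ n) Filter.atTop (nhds 0) :=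
        tendsto_pow_atTop_nhds_zero_of_lt_one hα0.le hα1
      simpa using this.const_mul (vBound J)
    · rw [Real.norm_eq_abs, abs_mul, abs_pow, abs_of_nonneg hα0.le, mul_comm]
      exact mul_le_mul_of_nonneg_right (pow_mulVec_abs_le M hM0 hM1 J n x)
        (pow_nonneg hα0.le n)
  have h3 : Filter.Tendsto
      (fun n => (∑ t ∈ Finset.range n, α ^ t * (M ^ t).mulVec gv x)
        + α ^ n * (M ^ n).mulVec J x) Filter.atTop (nhds (Jval P g α μ x)) := by
    simpa using h1.add h2
  exact le_of_tendsto h3 (Filter.Eventually.of_forall fun n => key n x)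

/-- `T J ≤ T_μ J` pointwise. -/
lemma Tbell_le_Tpol (μ : S → A) (J : S → ℝ) (x : S) :
    Tbell P g α J x ≤ Tpol P g α μ J x :=
  Finset.inf'_le _ (Finset.mem_univ (μ x))

/-- `T` has at most one fixed point. -/
lemma Tbell_fixed_unique (hP0 : ∀ x a y, 0 ≤ P x a y) (hP1 : ∀ x a, ∑ y, P x a y = 1)
    (hα0 : 0 < α) (hα1 : α < 1) (J J' : S → ℝ)
    (hJ : Tbell P g α J = J) (hJ' : Tbell P g α J' = J') : J = J' := by
  set C : ℝ := vBound (fun z => J z - J' z) with hC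
  have key : ∀ (K K' : S → ℝ) (x : S), (∀ y, |K y - K' y| ≤ C) →
      Tbell P g α K x - Tbell P g α K' x ≤ α * C := by
    intro K K' x hb
    obtain ⟨a, -, ha⟩ := Finset.exists_mem_eq_inf' (Finset.univ_nonempty (α := A))
      (fun a : A => g x a + α * ∑ y, P x a y * K' y)
    have h1 : Tbell P g α K x ≤ g x a + α * ∑ y, P x a y * K y :=
      Finset.inf'_le _ (Finset.mem_univ a)
    have h2 : Tbell P g α K' x = g x a + α * ∑ y, P x a y * K' y := ha
    have h3 : ∑ y, P x a y * K y - ∑ y, P x a y * K' y ≤ C := by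
      rw [← Finset.sum_sub_distrib]
      calc ∑ y, (P x a y * K y - P x a y * K' y)
          = ∑ y, P x a y * (K y - K' y) := by
            exact Finset.sum_congr rfl fun y _ => by ring
        _ ≤ ∑ y, P x a y * C := Finset.sum_le_sum fun y _ =>
            mul_le_mul_of_nonneg_left (le_of_abs_le (hb y)) (hP0 x a y)
        _ = C := by rw [← Finset.sum_mul, hP1, one_mul]
    nlinarith [h1, h2, h3]
  have hb : ∀ y, |J y - J' y| ≤ C := fun y => le_vBound (fun z => J z - J' z) y
  have hb' : ∀ y, |J' y - J y| ≤ C := fun y => by rw [abs_sub_comm]; exact hb y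
  have hCle : C ≤ α * C := by
    obtain ⟨x, -, hx⟩ := Finset.exists_mem_eq_sup' (Finset.univ_nonempty (α := S))
      (fun z => |J z - J' z|)
    have habs : |J x - J' x| ≤ α * C := by
      rw [abs_le]
      constructor
      · have := key J' J x hb'
        rw [hJ, hJ'] at this; linarith
      · have := key J J' x hb
        rw [hJ, hJ'] at this; linarith
    calc C = |J x - J' x| := hx
      _ ≤ α * C := habs
  have hC0 : 0 ≤ C := le_trans (abs_nonneg _) (hb (Classical.arbitrary S))
  have hCzero : C = 0 := by nlinarith
  funext x
  have h := hb x
  rw [hCzero] at h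
  exact sub_eq_zero.mp (abs_nonpos_iff.mp h)

end Aux2

theorem stmt_14 {S A : Type*} [Fintype S] [Nonempty S] [DecidableEq S] [Fintype A] [Nonempty A]
    (P : S → A → S → ℝ) (g : S → A → ℝ) (α : ℝ)
    (hP0 : ∀ x a y, 0 ≤ P x a y) (hP1 : ∀ x a, ∑ y, P x a y = 1)
    (hα0 : 0 < α) (hα1 : α < 1)
    (Jstar : S → ℝ) (hJstar : Tbell P g α Jstar = Jstar)
    (μseq : ℕ → S → A)
    (hgreedy : ∀ k : ℕ,
      Tpol P g α (μseq (k + 1)) (Jval P g α (μseq k)) =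
        Tbell P g α (Jval P g α (μseq k))) :
    ∃ N : ℕ, Jval P g α (μseq N) = Jstar := by
  set Jk : ℕ → S → ℝ := fun k => Jval P g α (μseq k) with hJk
  -- one-step improvement
  have hstep : ∀ k x, Jk (k + 1) x ≤ Jk k x := by
    intro k
    apply Jval_le_of_Tpol_le P g hP0 hP1 hα0 hα1
    intro x
    calc Tpol P g α (μseq (k + 1)) (Jk k) x = Tbell P g α (Jk k) x := by
          rw [hgreedy k]
      _ ≤ Tpol P g α (μseq k) (Jk k) x := Tbell_le_Tpol P g _ _ x
      _ = Jk k x := by rw [Jval_fixed P g hP0 hP1 hα0 hα1 (μseq k)]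
  have hanti : ∀ k l, k ≤ l → ∀ x, Jk l x ≤ Jk k x := by
    intro k l hkl
    induction l with
    | zero => intro x; simp [Nat.le_zero.mp hkl]
    | succ n ih =>
      rcases Nat.lt_or_ge k (n + 1) with h | h
      · intro x; exact le_trans (hstep n x) (ih (Nat.lt_succ_iff.mp h) x)
      · have : k = n + 1 := le_antisymm hkl h
        subst this; intro x; exact le_rfl
  -- pigeonhole: μseq is not injective
  obtain ⟨i, j, hij, heq⟩ := Finite.exists_ne_map_eq_of_infinite μseq
  -- wlog i < j
  obtain ⟨k, l, hkl, hkl'⟩ : ∃ k l, k < l ∧ μseq k = μseq l := by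
    rcases lt_or_gt_of_ne hij with h | h
    · exact ⟨i, j, h, heq⟩
    · exact ⟨j, i, h, heq.symm⟩
  have hJkl : Jk k = Jk l := by simp only [hJk, hkl']
  have hJfix : Jk (k + 1) = Jk k := by
    funext x
    refine le_antisymm (hstep k x) ?_
    calc Jk k x = Jk l x := by rw [hJkl]
      _ ≤ Jk (k + 1) x := hanti (k + 1) l hkl x
  -- Jk k is a fixed point of Tbell
  have hfix : Tbell P g α (Jk k) = Jk k := by
    calc Tbell P g α (Jk k) = Tpol P g α (μseq (k + 1)) (Jk k) := (hgreedy k).symm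
      _ = Tpol P g α (μseq (k + 1)) (Jk (k + 1)) := by rw [hJfix]
      _ = Jk (k + 1) := Jval_fixed P g hP0 hP1 hα0 hα1 (μseq (k + 1))
      _ = Jk k := hJfix
  exact ⟨k, Tbell_fixed_unique P g hP0 hP1 hα0 hα1 (Jk k) Jstar hfix hJstar⟩
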